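/- For a real number x_min ≥ 1, lim_{α→∞} ζ(α, x_min) / x_min^{−α} = 1, where ζ(α, x_min) = Σ_{k=0}^∞ (k + x_min)^{−α}. -/

import Mathlib

open Filter Real

/-- For real `x_min ≥ 1`, `lim_{α→∞} ζ(α, x_min) / x_min^{-α} = 1`, where
`ζ(α, x_min) = ∑_{k=0}^∞ (k + x_min)^{-α}`. -/
theorem stmt2 (x_min : ℝ) (hx : 1 ≤ x_min) :
    Filter.Tendsto (fun α : ℝ => (∑' k : ℕ, ((k : ℝ) + x_min) ^ (-α)) / x_min ^ (-α))
      Filter.atTop (nhds 1) := by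
  have hx0 : (0:ℝ) < x_min := lt_of_lt_of_le one_pos hx
  -- the ratio is a tsum of ratios
  have hratio : ∀ α : ℝ, (∑' k : ℕ, ((k : ℝ) + x_min) ^ (-α)) / x_min ^ (-α)
      = ∑' k : ℕ, (((k : ℝ) + x_min) / x_min) ^ (-α) := by
    intro α
    rw [← tsum_div_const]
    congr 1; funext k
    rw [Real.div_rpow (by positivity) hx0.le]
  simp only [hratio]
  -- summability lemmas
  have hp : ∀ s : ℝ, 1 < s → Summable (fun k : ℕ => (((k : ℝ) + x_min) / x_min) ^ (-s)) := by
    intro s hs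
    have h1 : Summable (fun k : ℕ => ((k : ℝ) + x_min) ^ (-s)) := by
      refine ((Real.summable_one_div_nat_add_rpow x_min s).mpr hs).congr fun k => ?_
      rw [Real.rpow_neg (by positivity), abs_of_pos (by positivity), one_div]
    exact (h1.div_const _).congr fun k =>
      (Real.div_rpow (by positivity) hx0.le _).symm
  have hq : ∀ s : ℝ, 1 < s → Summable (fun k : ℕ => (((k : ℝ) + 1 + x_min) / x_min) ^ (-s)) := by
    intro s hs
    have h1 : Summable (fun k : ℕ => ((k : ℝ) + 1 + x_min) ^ (-s)) := by
      refine ((Real.summable_one_div_nat_add_rpow (1 + x_min) s).mpr hs).congr fun k => ?_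
      rw [Real.rpow_neg (by positivity), abs_of_pos (by positivity), one_div, add_assoc]
    exact (h1.div_const _).congr fun k =>
      (Real.div_rpow (by positivity) hx0.le _).symm
  -- constants
  set r : ℝ := (1 + x_min) / x_min with hr_def
  have hr1 : 1 < r := by
    rw [hr_def, lt_div_iff₀ hx0]; linarith
  have hr0 : 0 < r := lt_trans one_pos hr1
  have hqr : ∀ k : ℕ, r ≤ ((k : ℝ) + 1 + x_min) / x_min := by
    intro k
    rw [hr_def, div_le_div_iff_of_pos_right hx0]
    have : (0:ℝ) ≤ (k : ℝ) := Nat.cast_nonneg k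
    linarith
  set C : ℝ := ∑' k : ℕ, (((k : ℝ) + 1 + x_min) / x_min) ^ (-(2:ℝ)) with hC_def
  -- splitting of the tsum for α > 1
  have hsplit : ∀ α : ℝ, 1 < α →
      (∑' k : ℕ, (((k : ℝ) + x_min) / x_min) ^ (-α))
        = 1 + ∑' k : ℕ, (((k : ℝ) + 1 + x_min) / x_min) ^ (-α) := by
    intro α hα
    rw [Summable.tsum_eq_zero_add (hp α hα)]
    congr 1
    · norm_num [div_self hx0.ne']
    · congr 1; funext k; push_cast; ring_nf
  -- squeeze
  have hT0 : Tendsto (fun α : ℝ => 1 + C * r ^ (2:ℝ) * (r⁻¹) ^ α) atTop (nhds 1) := by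
    have hi0 : (0:ℝ) < r⁻¹ := by positivity
    have hi1 : r⁻¹ < 1 := inv_lt_one_of_one_lt₀ hr1
    have h := (tendsto_rpow_atTop_of_base_lt_one r⁻¹ (by linarith) hi1).const_mul
        (C * r ^ (2:ℝ))
    simpa using tendsto_const_nhds.add h
  refine tendsto_of_tendsto_of_tendsto_of_le_of_le' tendsto_const_nhds hT0 ?_ ?_
  · -- lower bound: eventually 1 ≤ ratio
    filter_upwards [eventually_ge_atTop (2:ℝ)] with α hα
    have hα1 : (1:ℝ) < α := by linarith
    rw [hsplit α hα1]
    have : 0 ≤ ∑' k : ℕ, (((k : ℝ) + 1 + x_min) / x_min) ^ (-α) :=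
      tsum_nonneg fun k => Real.rpow_nonneg (by positivity) _
    linarith
  · -- upper bound
    filter_upwards [eventually_ge_atTop (2:ℝ)] with α hα
    have hα1 : (1:ℝ) < α := by linarith
    rw [hsplit α hα1]
    have hterm : ∀ k : ℕ, (((k : ℝ) + 1 + x_min) / x_min) ^ (-α)
        ≤ (((k : ℝ) + 1 + x_min) / x_min) ^ (-(2:ℝ)) * (r ^ (2:ℝ) * (r⁻¹) ^ α) := by
      intro k
      set b : ℝ := ((k : ℝ) + 1 + x_min) / x_min with hb_def
      have hb0 : 0 < b := by positivity
      have hbr : r ≤ b := hqr k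
      have e1 : b ^ (-α) = b ^ (-(2:ℝ)) * b ^ (-(α - 2)) := by
        rw [← Real.rpow_add hb0]; ring_nf
      rw [e1]
      have e2 : b ^ (-(α - 2)) ≤ r ^ (-(α - 2)) :=
        Real.rpow_le_rpow_of_nonpos hr0 hbr (by linarith)
      have e3 : r ^ (-(α - 2)) = r ^ (2:ℝ) * (r⁻¹) ^ α := by
        rw [Real.inv_rpow hr0.le, ← Real.rpow_neg hr0.le, ← Real.rpow_add hr0]
        ring_nf
      have := mul_le_mul_of_nonneg_left e2 (Real.rpow_nonneg hb0.le (-(2:ℝ)))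
      rw [e3] at this
      exact this
    have hsum2 := (hq 2 one_lt_two).mul_right (r ^ (2:ℝ) * (r⁻¹) ^ α)
    have := Summable.tsum_le_tsum hterm (hq α hα1) hsum2
    rw [tsum_mul_right] at this
    calc 1 + ∑' k : ℕ, (((k : ℝ) + 1 + x_min) / x_min) ^ (-α)
        ≤ 1 + C * (r ^ (2:ℝ) * (r⁻¹) ^ α) := by
          exact add_le_add_right this 1
      _ = 1 + C * r ^ (2:ℝ) * (r⁻¹) ^ α := by ring
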